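/- Let n ≥ 1. In the ℝ-vector space of real-valued functions on the set of finite multisets of boxes in ℝ^n (with pointwise operations), the ℝ-linear span of the family {F_{a,b} : (a,b) ∈ ℕ₊^n × ℕ^n} equals the ℝ-linear span of the family {p_{a,b} : (a,b) ∈ ℕ₊^n × ℕ^n}. -/

import Mathlib

open scoped Classical

/-- A box in `ℝ^n`: a pair `(x, y)` with `x_j < y_j` for all `j`. -/
def Box (n : ℕ) := {xy : (Fin n → ℝ) × (Fin n → ℝ) // ∀ j, xy.1 j < xy.2 j}

/-- The rank invariant `ρ_{u,v}(M)`: the number of boxes `(x, y)` in `M` (with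
multiplicity) such that `x ≤ u`, `u ≤ v` and `v ≤ y` componentwise. -/
noncomputable def rankInv (n : ℕ) (M : Multiset (Box n)) (u v : Fin n → ℝ) : ℝ :=
  ((M.filter (fun box =>
      (∀ j, box.1.1 j ≤ u j) ∧ (∀ j, u j ≤ v j) ∧ (∀ j, v j ≤ box.1.2 j))).card : ℝ)

/-- `F_{a,b}(M)`: the Lebesgue integral over `(z, w) ∈ ℝ^n × ℝ^J` (where
`J = {i : a_i ≥ 2}`, `I = {i : a_i = 1}`) of
`∏_{i∈J}(w_i - z_i)^{a_i-2} ∏_{i∈I} z_i^{b_i} ∏_{i∈J}(w_i + z_i)^{b_i} ρ_{z,z'}(M)`,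
where `z'_i = z_i` for `i ∈ I` and `z'_i = w_i` for `i ∈ J`. -/
noncomputable def Finv (n : ℕ) (a b : Fin n → ℕ) (M : Multiset (Box n)) : ℝ :=
  ∫ zw : (Fin n → ℝ) × ({i : Fin n // 2 ≤ a i} → ℝ),
    (∏ i : {i : Fin n // 2 ≤ a i}, (zw.2 i - zw.1 i.1) ^ (a i.1 - 2)) *
      (∏ i ∈ Finset.univ.filter (fun i => a i = 1), zw.1 i ^ b i) *
      (∏ i : {i : Fin n // 2 ≤ a i}, (zw.2 i + zw.1 i.1) ^ b i.1) *
      rankInv n M zw.1 (fun i => if h : 2 ≤ a i then zw.2 ⟨i, h⟩ else zw.1 i)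

/-- `p_{a,b}(M) = Σ_{(x,y) ∈ M} ∏_j (y_j - x_j)^{a_j} (y_j + x_j)^{b_j}`. -/
noncomputable def pBox (n : ℕ) (a b : Fin n → ℕ) (M : Multiset (Box n)) : ℝ :=
  (M.map (fun xy => ∏ j, (xy.1.2 j - xy.1.1 j) ^ a j * (xy.1.2 j + xy.1.1 j) ^ b j)).sum


section Aux

open MeasureTheory Submodule

open intervalIntegral in
lemma hblk_pow (x y : ℝ) (b : ℕ) : (∫ t in x..y, t ^ b) = (y ^ (b+1) - x ^ (b+1)) / ((b:ℝ)+1) := integral_pow b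

noncomputable section

/-- Truncation of a two-variable function to the region `x < y`. -/
def tr (f : ℝ → ℝ → ℝ) : ℝ → ℝ → ℝ := fun x y => if x < y then f x y else 0

/-- `(y-x)^a (y+x)^b`, truncated. -/
def mon (a b : ℕ) : ℝ → ℝ → ℝ := tr fun x y => (y - x) ^ a * (y + x) ^ b

/-- `∫_x^y t^b dt`, truncated. -/
def hblk (b : ℕ) : ℝ → ℝ → ℝ := tr fun x y => ∫ t in x..y, t ^ b

/-- `∫_x^y (y-t)^a (y+t)^b dt`, truncated. -/
def Hblk (a b : ℕ) : ℝ → ℝ → ℝ := tr fun x y => ∫ t in x..y, (y - t) ^ a * (y + t) ^ b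

/-- The region `x ≤ z ≤ w ≤ y` in the plane. -/
def box2 (x y : ℝ) : Set (ℝ × ℝ) := {p | x ≤ p.1 ∧ p.1 ≤ p.2 ∧ p.2 ≤ y}

def Gker (c b : ℕ) : ℝ × ℝ → ℝ := fun p => (p.2 - p.1) ^ c * (p.2 + p.1) ^ b

/-- `∬_{x≤z≤w≤y} (w-z)^c (w+z)^b`, truncated. -/
def Gblk (c b : ℕ) : ℝ → ℝ → ℝ :=
  tr fun x y => ∫ p : ℝ × ℝ, (box2 x y).indicator (Gker c b) p

def psi (b : ℕ) : ℝ → ℝ → ℝ := tr fun x y => y ^ b - x ^ b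

/-- FTC computation for `Hblk`-type integrands. -/
lemma ftc_H (a e : ℕ) (x y : ℝ) :
    ∫ t in x..y,
      (((a : ℝ) + 1) * ((y - t) ^ a * (y + t) ^ e) -
        (e : ℝ) * ((y - t) ^ (a + 1) * (y + t) ^ (e - 1)))
      = (y - x) ^ (a + 1) * (y + x) ^ e := by
  have hderiv : ∀ t ∈ Set.uIcc x y,
      HasDerivAt (fun t => -((y - t) ^ (a + 1) * (y + t) ^ e))
        (((a : ℝ) + 1) * ((y - t) ^ a * (y + t) ^ e) -
          (e : ℝ) * ((y - t) ^ (a + 1) * (y + t) ^ (e - 1))) t := by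
    intro t _
    have h1 : HasDerivAt (fun t : ℝ => (y - t) ^ (a + 1))
        ((↑(a + 1) : ℝ) * (y - t) ^ (a + 1 - 1) * (-1)) t :=
      (((hasDerivAt_id t).const_sub y).pow (a + 1))
    have h2 : HasDerivAt (fun t : ℝ => (y + t) ^ e)
        ((e : ℝ) * (y + t) ^ (e - 1) * 1) t :=
      (((hasDerivAt_id t).const_add y).pow e)
    have h : HasDerivAt (fun t => -((y - t) ^ (a + 1) * (y + t) ^ e)) _ t := (h1.mul h2).neg
    convert h using 1
    simp only [Nat.add_sub_cancel, Nat.cast_add, Nat.cast_one]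
    ring
  have hint : IntervalIntegrable
      (fun t => ((a : ℝ) + 1) * ((y - t) ^ a * (y + t) ^ e) -
        (e : ℝ) * ((y - t) ^ (a + 1) * (y + t) ^ (e - 1))) volume x y :=
    (Continuous.intervalIntegrable (by fun_prop) _ _)
  rw [intervalIntegral.integral_eq_sub_of_hasDerivAt hderiv hint]
  have : (y - y) = 0 := by ring
  rw [this]
  rw [zero_pow (Nat.succ_ne_zero a)]
  ring

/-- FTC computation for the inner integral of `Gblk`. -/
lemma ftc_G (c e : ℕ) (z y : ℝ) :
    ∫ w in z..y,
      (((c : ℝ) + 1) * ((w - z) ^ c * (w + z) ^ e) +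
        (e : ℝ) * ((w - z) ^ (c + 1) * (w + z) ^ (e - 1)))
      = (y - z) ^ (c + 1) * (y + z) ^ e := by
  have hderiv : ∀ w ∈ Set.uIcc z y,
      HasDerivAt (fun w => (w - z) ^ (c + 1) * (w + z) ^ e)
        (((c : ℝ) + 1) * ((w - z) ^ c * (w + z) ^ e) +
          (e : ℝ) * ((w - z) ^ (c + 1) * (w + z) ^ (e - 1))) w := by
    intro w _
    have h1 : HasDerivAt (fun w : ℝ => (w - z) ^ (c + 1))
        ((↑(c + 1) : ℝ) * (w - z) ^ (c + 1 - 1) * 1) w :=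
      (((hasDerivAt_id w).sub_const z).pow (c + 1))
    have h2 : HasDerivAt (fun w : ℝ => (w + z) ^ e)
        ((e : ℝ) * (w + z) ^ (e - 1) * 1) w :=
      (((hasDerivAt_id w).add_const z).pow e)
    have h : HasDerivAt (fun w => (w - z) ^ (c + 1) * (w + z) ^ e) _ w := h1.mul h2
    convert h using 1
    simp only [Nat.add_sub_cancel, Nat.cast_add, Nat.cast_one]
    ring
  have hint : IntervalIntegrable
      (fun w => ((c : ℝ) + 1) * ((w - z) ^ c * (w + z) ^ e) +
        (e : ℝ) * ((w - z) ^ (c + 1) * (w + z) ^ (e - 1))) volume z y :=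
    (Continuous.intervalIntegrable (by fun_prop) _ _)
  rw [intervalIntegral.integral_eq_sub_of_hasDerivAt hderiv hint]
  have : (z - z) = 0 := by ring
  rw [this, zero_pow (Nat.succ_ne_zero c), zero_mul, sub_zero]

/-- Relation `mon(a+1,e) = (a+1)·Hblk(a,e) − e·Hblk(a+1,e-1)`. -/
lemma monA (a e : ℕ) :
    mon (a + 1) e = ((a : ℝ) + 1) • Hblk a e - (e : ℝ) • Hblk (a + 1) (e - 1) := by
  funext x y
  simp only [mon, Hblk, tr, Pi.sub_apply, Pi.smul_apply, smul_eq_mul]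
  split_ifs with h
  · rw [← intervalIntegral.integral_const_mul, ← intervalIntegral.integral_const_mul,
      ← intervalIntegral.integral_sub
        (Continuous.intervalIntegrable (by fun_prop) _ _)
        (Continuous.intervalIntegrable (by fun_prop) _ _),
      ftc_H]
  · ring


lemma isClosed_box2 (x y : ℝ) : IsClosed (box2 x y) := by
  have : box2 x y = {p : ℝ × ℝ | x ≤ p.1} ∩ ({p | p.1 ≤ p.2} ∩ {p | p.2 ≤ y}) := rfl
  rw [this]
  exact (isClosed_le continuous_const continuous_fst).inter
    ((isClosed_le continuous_fst continuous_snd).inter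
      (isClosed_le continuous_snd continuous_const))

lemma isCompact_box2 (x y : ℝ) : IsCompact (box2 x y) := by
  refine IsCompact.of_isClosed_subset (isCompact_Icc (a := ((x, x) : ℝ × ℝ)) (b := (y, y)))
    (isClosed_box2 x y) ?_
  rintro ⟨z, w⟩ ⟨h1, h2, h3⟩
  exact ⟨⟨h1, h1.trans h2⟩, ⟨h2.trans h3, h3⟩⟩

lemma integrable_box2_indicator (x y : ℝ) {f : ℝ × ℝ → ℝ} (hf : Continuous f) :
    Integrable ((box2 x y).indicator f) := by
  rw [integrable_indicator_iff (isClosed_box2 x y).measurableSet]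
  exact hf.continuousOn.integrableOn_compact (isCompact_box2 x y)

lemma HblkB (c e : ℕ) :
    Hblk (c + 1) e = ((c : ℝ) + 1) • Gblk c e + (e : ℝ) • Gblk (c + 1) (e - 1) := by
  funext x y
  simp only [Hblk, Gblk, tr, Pi.add_apply, Pi.smul_apply, smul_eq_mul]
  split_ifs with h
  swap
  · ring
  have hGc : Continuous (Gker c e) := by unfold Gker; fun_prop
  have hGc' : Continuous (Gker (c + 1) (e - 1)) := by unfold Gker; fun_prop
  set D : ℝ × ℝ → ℝ := fun p =>
    ((c : ℝ) + 1) * Gker c e p + (e : ℝ) * Gker (c + 1) (e - 1) p with hD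
  have hDc : Continuous D := by fun_prop
  have key : ((c : ℝ) + 1) * (∫ p : ℝ × ℝ, (box2 x y).indicator (Gker c e) p) +
      (e : ℝ) * (∫ p : ℝ × ℝ, (box2 x y).indicator (Gker (c + 1) (e - 1)) p)
      = ∫ p : ℝ × ℝ, (box2 x y).indicator D p := by
    rw [← integral_const_mul, ← integral_const_mul,
      ← integral_add ((integrable_box2_indicator x y hGc).const_mul _)
        ((integrable_box2_indicator x y hGc').const_mul _)]
    congr 1
    funext p
    by_cases hp : p ∈ box2 x y
    · simp [Set.indicator_of_mem hp, hD]
    · simp [Set.indicator_of_notMem hp]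
  rw [key]
  have hInt : Integrable ((box2 x y).indicator D) := integrable_box2_indicator x y hDc
  rw [Measure.volume_eq_prod] at hInt ⊢
  rw [integral_prod _ hInt]
  have inner : ∀ z : ℝ, (∫ w : ℝ, (box2 x y).indicator D (z, w))
      = (Set.Icc x y).indicator (fun z => (y - z) ^ (c + 1) * (y + z) ^ e) z := by
    intro z
    by_cases hz : x ≤ z ∧ z ≤ y
    · have : (fun w => (box2 x y).indicator D (z, w))
          = (Set.Icc z y).indicator (fun w => D (z, w)) := by
        funext w
        by_cases hw : z ≤ w ∧ w ≤ y
        · rw [Set.indicator_of_mem (by exact ⟨hz.1, hw.1, hw.2⟩),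
            Set.indicator_of_mem (by exact ⟨hw.1, hw.2⟩)]
        · rw [Set.indicator_of_notMem, Set.indicator_of_notMem]
          · exact fun hmem => hw ⟨hmem.1, hmem.2⟩
          · exact fun hmem => hw ⟨hmem.2.1, hmem.2.2⟩
      rw [this, integral_indicator measurableSet_Icc,
        integral_Icc_eq_integral_Ioc, ← intervalIntegral.integral_of_le hz.2,
        Set.indicator_of_mem (Set.mem_Icc.2 hz)]
      exact ftc_G c e z y
    · have hzero : (fun w => (box2 x y).indicator D (z, w)) = fun _ => (0 : ℝ) := by
        funext w
        rw [Set.indicator_of_notMem]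
        intro hmem
        rcases hmem with ⟨h1, h2, h3⟩
        exact hz ⟨h1, le_trans h2 h3⟩
      rw [hzero, integral_zero, Set.indicator_of_notMem (fun hmem => hz (Set.mem_Icc.1 hmem))]
  rw [show (fun z => ∫ w : ℝ, (box2 x y).indicator D (z, w)) = fun z =>
      (Set.Icc x y).indicator (fun z => (y - z) ^ (c + 1) * (y + z) ^ e) z from funext inner]
  rw [integral_indicator measurableSet_Icc, integral_Icc_eq_integral_Ioc,
    ← intervalIntegral.integral_of_le h.le]

abbrev V2 := ℝ → ℝ → ℝ

def M1 : Set V2 := {f | ∃ a b, f = mon (a + 1) b}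
def M2 : Set V2 := {f | ∃ a b, f = mon (a + 2) b}
def HSet : Set V2 := {f | ∃ a b, f = Hblk (a + 1) b}
def GSet : Set V2 := {f | ∃ c b, f = Gblk c b}
def hSet : Set V2 := {f | ∃ b, f = hblk b}

lemma M2_subset_M1 : M2 ⊆ M1 := by
  rintro f ⟨a, b, rfl⟩; exact ⟨a + 1, b, rfl⟩


lemma Hblk_mem_span_M2 : ∀ e a, Hblk (a + 1) e ∈ span ℝ M2 := by
  intro e
  induction e with
  | zero =>
    intro a
    rw [← Submodule.smul_mem_iff _ (show ((a:ℝ) + 1) + 1 ≠ 0 by positivity)]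
    have h2 : (((a:ℝ) + 1) + 1) • Hblk (a + 1) 0 = mon (a + 2) 0 := by
      rw [show a + 2 = (a + 1) + 1 from rfl, monA (a + 1) 0]
      push_cast
      module
    rw [h2]
    exact subset_span ⟨a, 0, rfl⟩
  | succ b ih =>
    intro a
    rw [← Submodule.smul_mem_iff _ (show ((a:ℝ) + 1) + 1 ≠ 0 by positivity)]
    have h2 : (((a:ℝ) + 1) + 1) • Hblk (a + 1) (b + 1)
        = mon (a + 2) (b + 1) + ((b:ℝ) + 1) • Hblk (a + 2) (b + 1 - 1) := by
      rw [show a + 2 = (a + 1) + 1 from rfl, monA (a + 1) (b + 1)]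
      push_cast
      module
    rw [h2, show b + 1 - 1 = b from rfl]
    exact add_mem (subset_span ⟨a, b + 1, rfl⟩)
      (smul_mem _ _ (show Hblk (a + 1 + 1) b ∈ _ from ih (a + 1)))

lemma mon2_mem_span_HSet (a e : ℕ) : mon (a + 2) e ∈ span ℝ HSet := by
  have h := monA (a + 1) e
  rw [show a + 1 + 1 = a + 2 from rfl] at h
  rw [h]
  exact sub_mem (smul_mem _ _ (subset_span ⟨a, e, rfl⟩))
    (smul_mem _ _ (subset_span ⟨a + 1, e - 1, rfl⟩))

lemma Gblk_mem_span_HSet : ∀ e c, Gblk c e ∈ span ℝ HSet := by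
  intro e
  induction e with
  | zero =>
    intro c
    rw [← Submodule.smul_mem_iff _ (show ((c:ℝ) + 1) ≠ 0 by positivity)]
    have h2 : ((c:ℝ) + 1) • Gblk c 0 = Hblk (c + 1) 0 := by
      rw [HblkB c 0]
      push_cast
      module
    rw [h2]
    exact subset_span ⟨c, 0, rfl⟩
  | succ b ih =>
    intro c
    rw [← Submodule.smul_mem_iff _ (show ((c:ℝ) + 1) ≠ 0 by positivity)]
    have h2 : ((c:ℝ) + 1) • Gblk c (b + 1)
        = Hblk (c + 1) (b + 1) - ((b:ℝ) + 1) • Gblk (c + 1) (b + 1 - 1) := by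
      rw [HblkB c (b + 1)]
      push_cast
      module
    rw [h2, show b + 1 - 1 = b from rfl]
    exact sub_mem (subset_span ⟨c, b + 1, rfl⟩) (smul_mem _ _ (ih (c + 1)))

lemma Hblk_mem_span_GSet (a e : ℕ) : Hblk (a + 1) e ∈ span ℝ GSet := by
  rw [HblkB a e]
  exact add_mem (smul_mem _ _ (subset_span ⟨a, e, rfl⟩))
    (smul_mem _ _ (subset_span ⟨a + 1, e - 1, rfl⟩))

/-- pointwise multiplication operator -/
def mulOp (g : ℝ → ℝ → ℝ) : V2 →ₗ[ℝ] V2 where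
  toFun f := fun x y => g x y * f x y
  map_add' f₁ f₂ := by funext x y; simp [mul_add]
  map_smul' c f := by funext x y; simp [smul_eq_mul]; ring

lemma mulOp_span_le {g : ℝ → ℝ → ℝ} {S T : Set V2}
    (h : ∀ f ∈ S, mulOp g f ∈ span ℝ T) :
    ∀ f ∈ span ℝ S, mulOp g f ∈ span ℝ T := by
  intro f hf
  have hle : (span ℝ S).map (mulOp g) ≤ span ℝ T := by
    rw [Submodule.map_span]
    exact span_le.2 (by rintro _ ⟨f', hf', rfl⟩; exact h f' hf')
  exact hle ⟨f, hf, rfl⟩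

def gV : ℝ → ℝ → ℝ := fun x y => y + x
def gV2 : ℝ → ℝ → ℝ := fun x y => (y + x) ^ 2
def gU2 : ℝ → ℝ → ℝ := fun x y => (y - x) ^ 2

lemma mulOp_gV_mon (a b : ℕ) : mulOp gV (mon a b) = mon a (b + 1) := by
  funext x y
  simp only [mulOp, mon, tr, gV, LinearMap.coe_mk, AddHom.coe_mk]
  split_ifs <;> ring

lemma mulOp_gV2_mon (a b : ℕ) : mulOp gV2 (mon a b) = mon a (b + 2) := by
  funext x y
  simp only [mulOp, mon, tr, gV2, LinearMap.coe_mk, AddHom.coe_mk]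
  split_ifs <;> ring

lemma mulOp_gU2_mon (a b : ℕ) : mulOp gU2 (mon a b) = mon (a + 2) b := by
  funext x y
  simp only [mulOp, mon, tr, gU2, LinearMap.coe_mk, AddHom.coe_mk]
  split_ifs <;> ring

lemma mulOp_gV_M2 : ∀ f ∈ M2, mulOp gV f ∈ span ℝ M2 := by
  rintro _ ⟨a, b, rfl⟩
  rw [mulOp_gV_mon]
  exact subset_span ⟨a, b + 1, rfl⟩

lemma mulOp_gV2_M2 : ∀ f ∈ M2, mulOp gV2 f ∈ span ℝ M2 := by
  rintro _ ⟨a, b, rfl⟩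
  rw [mulOp_gV2_mon]
  exact subset_span ⟨a, b + 2, rfl⟩

lemma mulOp_gU2_M1 : ∀ f ∈ M1, mulOp gU2 f ∈ span ℝ M2 := by
  rintro _ ⟨a, b, rfl⟩
  rw [mulOp_gU2_mon]
  exact subset_span ⟨a + 1, b, rfl⟩

lemma psi_rec (b : ℕ) : psi (b + 2) = mulOp gV (psi (b + 1))
    - (1 / 4 : ℝ) • mulOp gV2 (psi b) + (1 / 4 : ℝ) • mulOp gU2 (psi b) := by
  funext x y
  simp only [mulOp, psi, tr, gV, gV2, gU2, LinearMap.coe_mk, AddHom.coe_mk,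
    Pi.add_apply, Pi.sub_apply, Pi.smul_apply, smul_eq_mul]
  split_ifs <;> ring

lemma psi_eq_mon_low : psi 1 = mon 1 0 ∧ psi 2 = mon 1 1 := by
  constructor <;>
  · funext x y
    simp only [psi, mon, tr]
    split_ifs <;> ring

lemma psi_step : ∀ b : ℕ,
    (psi (b + 1) - (((b : ℝ) + 1) / 2 ^ b) • mon 1 b ∈ span ℝ M2) ∧
      psi (b + 1) ∈ span ℝ M1 := by
  intro b
  induction b using Nat.strong_induction_on with
  | _ b ih =>
    match b with
    | 0 =>
      have h0 : psi (0 + 1) - ((((0:ℕ):ℝ) + 1) / 2 ^ (0:ℕ)) • mon 1 0 = 0 := by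
        rw [show psi (0 + 1) = mon 1 0 from psi_eq_mon_low.1]
        norm_num
      exact ⟨h0 ▸ zero_mem _, psi_eq_mon_low.1 ▸ subset_span ⟨0, 0, rfl⟩⟩
    | 1 =>
      have h0 : psi (1 + 1) - ((((1:ℕ):ℝ) + 1) / 2 ^ (1:ℕ)) • mon 1 1 = 0 := by
        rw [show psi (1 + 1) = mon 1 1 from psi_eq_mon_low.2]
        norm_num
      exact ⟨h0 ▸ zero_mem _, psi_eq_mon_low.2 ▸ subset_span ⟨0, 1, rfl⟩⟩
    | (b + 2) =>
      obtain ⟨A1, P1⟩ := ih (b + 1) (by omega)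
      obtain ⟨A2, P2⟩ := ih b (by omega)
      push_cast at A1 A2 ⊢
      have key : psi (b + 2 + 1) - (((b:ℝ) + 2 + 1) / 2 ^ (b + 2)) • mon 1 (b + 2)
          = mulOp gV (psi (b + 1 + 1) - (((b:ℝ) + 1 + 1) / 2 ^ (b + 1)) • mon 1 (b + 1))
            - (1 / 4 : ℝ) • mulOp gV2 (psi (b + 1) - (((b:ℝ) + 1) / 2 ^ b) • mon 1 b)
            + (1 / 4 : ℝ) • mulOp gU2 (psi (b + 1)) := by
        rw [map_sub (mulOp gV), map_sub (mulOp gV2), LinearMap.map_smul (mulOp gV),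
          LinearMap.map_smul (mulOp gV2), mulOp_gV_mon, mulOp_gV2_mon,
          show psi (b + 2 + 1) = psi (b + 1 + 2) from rfl, psi_rec (b + 1),
          show b + 1 + 1 = b + 2 from rfl]
        have hc : ((b:ℝ) + 2 + 1) / 2 ^ (b + 2)
            = ((b:ℝ) + 1 + 1) / 2 ^ (b + 1) - (1 / 4 : ℝ) * (((b:ℝ) + 1) / 2 ^ b) := by
          field_simp
          ring
        rw [hc]
        module
      have hmem : psi (b + 2 + 1) - (((b:ℝ) + 2 + 1) / 2 ^ (b + 2)) • mon 1 (b + 2)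
          ∈ span ℝ M2 := by
        rw [key]
        exact add_mem (sub_mem (mulOp_span_le mulOp_gV_M2 _ A1)
          (smul_mem _ _ (mulOp_span_le mulOp_gV2_M2 _ A2)))
          (smul_mem _ _ (mulOp_span_le mulOp_gU2_M1 _ P2))
      refine ⟨hmem, ?_⟩
      have hrw : psi (b + 2 + 1) = (psi (b + 2 + 1)
          - (((b:ℝ) + 2 + 1) / 2 ^ (b + 2)) • mon 1 (b + 2))
          + (((b:ℝ) + 2 + 1) / 2 ^ (b + 2)) • mon 1 (b + 2) := by abel
      rw [hrw]
      exact add_mem (span_mono M2_subset_M1 hmem)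
        (smul_mem _ _ (subset_span ⟨0, b + 2, rfl⟩))

lemma hblk_eq_psi (b : ℕ) : hblk b = (((b:ℝ) + 1))⁻¹ • psi (b + 1) := by
  funext x y
  simp only [hblk, psi, tr, Pi.smul_apply, smul_eq_mul]
  split_ifs with h
  · rw [hblk_pow]
    push_cast
    ring
  · ring

theorem span_blocks : span ℝ (hSet ∪ GSet) = span ℝ M1 := by
  have hHM2 : span ℝ HSet ≤ span ℝ M2 :=
    span_le.2 (by rintro _ ⟨a, b, rfl⟩; exact Hblk_mem_span_M2 b a)
  have hM2H : span ℝ M2 ≤ span ℝ HSet :=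
    span_le.2 (by rintro _ ⟨a, b, rfl⟩; exact mon2_mem_span_HSet a b)
  have hGH : span ℝ GSet ≤ span ℝ HSet :=
    span_le.2 (by rintro _ ⟨c, b, rfl⟩; exact Gblk_mem_span_HSet b c)
  have hHG : span ℝ HSet ≤ span ℝ GSet :=
    span_le.2 (by rintro _ ⟨a, b, rfl⟩; exact Hblk_mem_span_GSet a b)
  have hGU : span ℝ GSet ≤ span ℝ (hSet ∪ GSet) := span_mono Set.subset_union_right
  apply le_antisymm
  · rw [span_le]
    rintro f (⟨b, rfl⟩ | ⟨c, b, rfl⟩)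
    · rw [hblk_eq_psi b]
      exact smul_mem _ _ (psi_step b).2
    · exact span_mono M2_subset_M1 (hHM2 (hGH (subset_span ⟨c, b, rfl⟩)))
  · rw [span_le]
    rintro f ⟨a, b, rfl⟩
    match a with
    | 0 =>
      have hs := (psi_step b).1
      show mon (0 + 1) b ∈ span ℝ (hSet ∪ GSet)
      rw [show (0:ℕ) + 1 = 1 from rfl,
        ← Submodule.smul_mem_iff _ (show (((b:ℝ) + 1) / 2 ^ b) ≠ 0 by positivity)]
      have heq : (((b:ℝ) + 1) / 2 ^ b) • mon 1 b
          = psi (b + 1) - (psi (b + 1) - (((b:ℝ) + 1) / 2 ^ b) • mon 1 b) := by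
        abel
      rw [heq]
      refine sub_mem ?_ (hGU (hHG (hM2H hs)))
      have : psi (b + 1) = ((b:ℝ) + 1) • hblk b := by
        rw [hblk_eq_psi b, smul_smul, mul_inv_cancel₀ (by positivity), one_smul]
      rw [this]
      exact smul_mem _ _ (subset_span (Or.inl ⟨b, rfl⟩))
    | (a + 1) =>
      exact hGU (hHG (hM2H (subset_span ⟨a, b, rfl⟩)))


/-- The multilinear "moment" map sending per-coordinate functions to a function on
multisets of boxes. -/
def Phi (n : ℕ) : MultilinearMap ℝ (fun _ : Fin n => V2) (Multiset (Box n) → ℝ) where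
  toFun g := fun M => (M.map (fun box => ∏ i, g i (box.1.1 i) (box.1.2 i))).sum
  map_update_add' {dec} g i f₁ f₂ := by
    funext M
    have hexp : ∀ (f : V2) (box : Box n),
        (∏ j, Function.update g i f j (box.1.1 j) (box.1.2 j))
          = f (box.1.1 i) (box.1.2 i) *
            ∏ j ∈ Finset.univ \ {i}, g j (box.1.1 j) (box.1.2 j) := by
      intro f box
      rw [Finset.prod_congr rfl (fun j _ =>
        Function.apply_update (fun k (v : V2) => v (box.1.1 k) (box.1.2 k)) g i f j),
        Finset.prod_update_of_mem (Finset.mem_univ i)]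
    simp only [hexp, Pi.add_apply, add_mul, Pi.add_apply]
    exact Multiset.sum_map_add
  map_update_smul' {dec} g i c f := by
    funext M
    have hexp : ∀ (f : V2) (box : Box n),
        (∏ j, Function.update g i f j (box.1.1 j) (box.1.2 j))
          = f (box.1.1 i) (box.1.2 i) *
            ∏ j ∈ Finset.univ \ {i}, g j (box.1.1 j) (box.1.2 j) := by
      intro f box
      rw [Finset.prod_congr rfl (fun j _ =>
        Function.apply_update (fun k (v : V2) => v (box.1.1 k) (box.1.2 k)) g i f j),
        Finset.prod_update_of_mem (Finset.mem_univ i)]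
    simp only [hexp, Pi.smul_apply, smul_eq_mul, mul_assoc]
    exact Multiset.sum_map_mul_left

lemma Phi_mem_span {n : ℕ} {A : Set V2} (g : Fin n → V2) (hg : ∀ i, g i ∈ span ℝ A) :
    Phi n g ∈ span ℝ {f | ∃ g' : Fin n → V2, (∀ i, g' i ∈ A) ∧ f = Phi n g'} := by
  choose m c v hv using fun i => mem_span_set'.1 (hg i)
  have hrw : g = fun i => ∑ k ∈ (Finset.univ : Finset (Fin (m i))), c i k • (v i k : V2) :=
    funext fun i => (hv i).symm
  rw [hrw, MultilinearMap.map_sum_finset]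
  refine sum_mem fun r _ => ?_
  rw [show (fun i => c i (r i) • (v i (r i) : V2))
      = fun i => c i (r i) • (fun i => (v i (r i) : V2)) i from rfl,
    MultilinearMap.map_smul_univ]
  exact smul_mem _ _ (subset_span ⟨fun i => v i (r i), fun i => (v i (r i)).2, rfl⟩)

lemma span_Phi_eq {n : ℕ} {A B : Set V2} (h : span ℝ A = span ℝ B) :
    span ℝ {f : Multiset (Box n) → ℝ | ∃ g : Fin n → V2, (∀ i, g i ∈ A) ∧ f = Phi n g}
      = span ℝ {f | ∃ g : Fin n → V2, (∀ i, g i ∈ B) ∧ f = Phi n g} := by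
  apply le_antisymm <;>
  · rw [span_le]
    rintro _ ⟨g, hgm, rfl⟩
    refine SetLike.mem_coe.2 (Phi_mem_span g fun i => ?_)
    first
      | exact h ▸ subset_span (hgm i)
      | exact h.symm ▸ subset_span (hgm i)

variable {n : ℕ}

/-- The space of integration of `Finv`. -/
abbrev Om (n : ℕ) (a : Fin n → ℕ) := (Fin n → ℝ) × ({i : Fin n // 2 ≤ a i} → ℝ)

def vfun (n : ℕ) (a : Fin n → ℕ) (zw : Om n a) : Fin n → ℝ :=
  fun i => if h : 2 ≤ a i then zw.2 ⟨i, h⟩ else zw.1 i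

def polyP (n : ℕ) (a b : Fin n → ℕ) (zw : Om n a) : ℝ :=
  (∏ i : {i : Fin n // 2 ≤ a i}, (zw.2 i - zw.1 i.1) ^ (a i.1 - 2)) *
    (∏ i ∈ Finset.univ.filter (fun i => a i = 1), zw.1 i ^ b i) *
    (∏ i : {i : Fin n // 2 ≤ a i}, (zw.2 i + zw.1 i.1) ^ b i.1)

def condP (n : ℕ) (a : Fin n → ℕ) (x y : Fin n → ℝ) (zw : Om n a) : Prop :=
  (∀ j, x j ≤ zw.1 j) ∧ (∀ j, zw.1 j ≤ vfun n a zw j) ∧ (∀ j, vfun n a zw j ≤ y j)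

lemma continuous_polyP (a b : Fin n → ℕ) : Continuous (polyP n a b) := by
  unfold polyP
  refine ((Continuous.mul ?_ ?_).mul ?_) <;>
  · apply continuous_finset_prod
    intro i _
    fun_prop

lemma continuous_vfun (a : Fin n → ℕ) (j : Fin n) :
    Continuous fun zw : Om n a => vfun n a zw j := by
  unfold vfun
  by_cases h : 2 ≤ a j
  · simp only [dif_pos h]
    fun_prop
  · simp only [dif_neg h]
    fun_prop

lemma isClosed_condP (a : Fin n → ℕ) (x y : Fin n → ℝ) :
    IsClosed {zw : Om n a | condP n a x y zw} := by
  have : {zw : Om n a | condP n a x y zw}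
      = (⋂ j, {zw : Om n a | x j ≤ zw.1 j}) ∩
        ((⋂ j, {zw : Om n a | zw.1 j ≤ vfun n a zw j}) ∩
          (⋂ j, {zw : Om n a | vfun n a zw j ≤ y j})) := by
    ext zw
    simp only [condP, Set.mem_setOf_eq, Set.mem_inter_iff, Set.mem_iInter]
  rw [this]
  refine IsClosed.inter (isClosed_iInter fun j => ?_)
    (IsClosed.inter (isClosed_iInter fun j => ?_) (isClosed_iInter fun j => ?_))
  · exact isClosed_le continuous_const ((continuous_apply j).comp continuous_fst)
  · exact isClosed_le ((continuous_apply j).comp continuous_fst) (continuous_vfun a j)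
  · exact isClosed_le (continuous_vfun a j) continuous_const

lemma condP_subset (a : Fin n → ℕ) (x y : Fin n → ℝ) :
    {zw : Om n a | condP n a x y zw} ⊆
      (Set.univ.pi fun i => Set.Icc (x i) (y i)) ×ˢ
        (Set.univ.pi fun j : {i : Fin n // 2 ≤ a i} => Set.Icc (x j.1) (y j.1)) := by
  rintro ⟨z, w⟩ ⟨h1, h2, h3⟩
  constructor
  · intro i _
    exact ⟨h1 i, (h2 i).trans (h3 i)⟩
  · intro j _
    have hv : vfun n a (z, w) j.1 = w j := by
      simp only [vfun, dif_pos j.2]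
    constructor
    · have := (h1 j.1).trans (h2 j.1)
      rwa [hv] at this
    · have := h3 j.1
      rwa [hv] at this

lemma integrable_condP_indicator (a b : Fin n → ℕ) (x y : Fin n → ℝ) :
    Integrable ({zw : Om n a | condP n a x y zw}.indicator (polyP n a b)) := by
  have hcl := isClosed_condP a x y
  have hcpt : IsCompact {zw : Om n a | condP n a x y zw} := by
    refine IsCompact.of_isClosed_subset (IsCompact.prod (isCompact_univ_pi fun i => isCompact_Icc)
      (isCompact_univ_pi fun j => isCompact_Icc)) hcl (condP_subset a x y)
  rw [integrable_indicator_iff hcl.measurableSet]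
  exact (continuous_polyP a b).continuousOn.integrableOn_compact hcpt

lemma condP_iff (a : Fin n → ℕ) (ha : ∀ j, 1 ≤ a j) (x y : Fin n → ℝ) (zw : Om n a) :
    condP n a x y zw ↔
      ((∀ i ∈ Finset.univ.filter (fun i => a i = 1), zw.1 i ∈ Set.Icc (x i) (y i)) ∧
        (∀ j : {i : Fin n // 2 ≤ a i}, (zw.1 j.1, zw.2 j) ∈ box2 (x j.1) (y j.1))) := by
  constructor
  · rintro ⟨h1, h2, h3⟩
    constructor
    · intro i hi
      have hne : ¬ 2 ≤ a i := by
        have := (Finset.mem_filter.1 hi).2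
        omega
      have hv : vfun n a zw i = zw.1 i := dif_neg hne
      refine ⟨h1 i, ?_⟩
      have := h3 i
      rwa [hv] at this
    · intro j
      have hv : vfun n a zw j.1 = zw.2 j := dif_pos j.2
      refine ⟨h1 j.1, ?_, ?_⟩
      · have := h2 j.1; rwa [hv] at this
      · have := h3 j.1; rwa [hv] at this
  · rintro ⟨hI, hJ⟩
    have hP : ∀ i, x i ≤ zw.1 i ∧ zw.1 i ≤ vfun n a zw i ∧ vfun n a zw i ≤ y i := by
      intro i
      by_cases h2 : 2 ≤ a i
      · have hv : vfun n a zw i = zw.2 ⟨i, h2⟩ := dif_pos h2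
        obtain ⟨q1, q2, q3⟩ := hJ ⟨i, h2⟩
        exact ⟨q1, by rw [hv]; exact q2, by rw [hv]; exact q3⟩
      · have ha1 : a i = 1 := by have := ha i; omega
        have hv : vfun n a zw i = zw.1 i := dif_neg h2
        obtain ⟨q1, q2⟩ := hI i (Finset.mem_filter.2 ⟨Finset.mem_univ _, ha1⟩)
        exact ⟨q1, by rw [hv], by rw [hv]; exact q2⟩
    exact ⟨fun i => (hP i).1, fun i => (hP i).2.1, fun i => (hP i).2.2⟩

/-- Pointwise factorization of the indicator integrand. -/
lemma factorize (a b : Fin n → ℕ) (ha : ∀ j, 1 ≤ a j) (x y : Fin n → ℝ) (zw : Om n a) :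
    polyP n a b zw * (if condP n a x y zw then (1:ℝ) else 0)
      = (∏ i ∈ Finset.univ.filter (fun i => a i = 1),
            (Set.Icc (x i) (y i)).indicator (fun t => t ^ b i) (zw.1 i)) *
        ∏ j : {i : Fin n // 2 ≤ a i},
            (box2 (x j.1) (y j.1)).indicator (Gker (a j.1 - 2) (b j.1)) (zw.1 j.1, zw.2 j) := by
  simp only [Set.indicator_apply]
  by_cases hI : ∀ i ∈ Finset.univ.filter (fun i => a i = 1), zw.1 i ∈ Set.Icc (x i) (y i)
  · by_cases hJ : ∀ j : {i : Fin n // 2 ≤ a i}, (zw.1 j.1, zw.2 j) ∈ box2 (x j.1) (y j.1)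
    · rw [if_pos ((condP_iff a ha x y zw).2 ⟨hI, hJ⟩), mul_one,
        Finset.prod_congr rfl (fun i hi => if_pos (hI i hi)),
        Finset.prod_congr rfl (fun j _ => if_pos (hJ j))]
      unfold polyP Gker
      rw [Finset.prod_mul_distrib]
      ring
    · push_neg at hJ
      obtain ⟨j₀, hj₀⟩ := hJ
      have h0 : (if condP n a x y zw then (1:ℝ) else 0) = 0 :=
        if_neg (fun h => hj₀ (((condP_iff a ha x y zw).1 h).2 j₀))
      rw [h0, mul_zero, eq_comm]
      exact mul_eq_zero_of_right _ (Finset.prod_eq_zero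
        (f := fun j : {i : Fin n // 2 ≤ a i} =>
          if (zw.1 j.1, zw.2 j) ∈ box2 (x j.1) (y j.1)
          then Gker (a j.1 - 2) (b j.1) (zw.1 j.1, zw.2 j) else 0)
        (Finset.mem_univ j₀) (if_neg hj₀))
  · push_neg at hI
    obtain ⟨i₀, hi₀mem, hi₀⟩ := hI
    have h0 : (if condP n a x y zw then (1:ℝ) else 0) = 0 :=
      if_neg (fun h => hi₀ (((condP_iff a ha x y zw).1 h).1 i₀ hi₀mem))
    rw [h0, mul_zero, eq_comm]
    exact mul_eq_zero_of_left (Finset.prod_eq_zero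
        (f := fun i => if zw.1 i ∈ Set.Icc (x i) (y i) then zw.1 i ^ b i else 0)
        hi₀mem (if_neg hi₀)) _


theorem per_box (a b : Fin n → ℕ) (ha : ∀ j, 1 ≤ a j) (x y : Fin n → ℝ)
    (hxy : ∀ j, x j < y j) :
    (∫ zw : Om n a, polyP n a b zw * (if condP n a x y zw then (1:ℝ) else 0))
      = ∏ i, (if a i = 1 then hblk (b i) (x i) (y i)
          else Gblk (a i - 2) (b i) (x i) (y i)) := by
  have hstart : (fun zw : Om n a => polyP n a b zw * (if condP n a x y zw then (1:ℝ) else 0))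
      = fun zw : Om n a =>
        (∏ i ∈ Finset.univ.filter (fun i => a i = 1),
            (Set.Icc (x i) (y i)).indicator (fun t => t ^ b i) (zw.1 i)) *
          ∏ j : {i : Fin n // 2 ≤ a i},
            (box2 (x j.1) (y j.1)).indicator (Gker (a j.1 - 2) (b j.1)) (zw.1 j.1, zw.2 j) :=
    funext (factorize a b ha x y)
  have hind : {zw : Om n a | condP n a x y zw}.indicator (polyP n a b)
      = (fun zw : Om n a => polyP n a b zw * (if condP n a x y zw then (1:ℝ) else 0)) := by
    funext zw
    rw [Set.indicator_apply]
    simp only [Set.mem_setOf_eq]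
    by_cases h : condP n a x y zw
    · rw [if_pos h, if_pos h, mul_one]
    · rw [if_neg h, if_neg h, mul_zero]
  have hInt : Integrable (fun zw : Om n a =>
      (∏ i ∈ Finset.univ.filter (fun i => a i = 1),
          (Set.Icc (x i) (y i)).indicator (fun t => t ^ b i) (zw.1 i)) *
        ∏ j : {i : Fin n // 2 ≤ a i},
          (box2 (x j.1) (y j.1)).indicator (Gker (a j.1 - 2) (b j.1)) (zw.1 j.1, zw.2 j)) := by
    rw [← hstart, ← hind]
    exact integrable_condP_indicator a b x y
  rw [hstart]
  rw [Measure.volume_eq_prod] at hInt ⊢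
  rw [MeasureTheory.integral_prod _ hInt]
  dsimp only
  have hcombine : ∀ z : Fin n → ℝ,
      (∫ w : {i : Fin n // 2 ≤ a i} → ℝ,
        (∏ i ∈ Finset.univ.filter (fun i => a i = 1),
            (Set.Icc (x i) (y i)).indicator (fun t => t ^ b i) (z i)) *
          ∏ j : {i : Fin n // 2 ≤ a i},
            (box2 (x j.1) (y j.1)).indicator (Gker (a j.1 - 2) (b j.1)) (z j.1, w j))
      = ∏ i, (if a i = 1
          then (Set.Icc (x i) (y i)).indicator (fun t => t ^ b i) (z i)
          else ∫ t : ℝ, (box2 (x i) (y i)).indicator (Gker (a i - 2) (b i)) (z i, t)) := by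
    intro z
    rw [MeasureTheory.integral_const_mul,
      MeasureTheory.integral_fintype_prod_volume_eq_prod
        (fun (j : {i : Fin n // 2 ≤ a i}) (t : ℝ) =>
          (box2 (x j.1) (y j.1)).indicator (Gker (a j.1 - 2) (b j.1)) (z j.1, t)),
      ← Finset.prod_filter_mul_prod_filter_not Finset.univ (fun i => a i = 1)
        (fun i => if a i = 1
          then (Set.Icc (x i) (y i)).indicator (fun t => t ^ b i) (z i)
          else ∫ t : ℝ, (box2 (x i) (y i)).indicator (Gker (a i - 2) (b i)) (z i, t))]
    congr 1
    · exact Finset.prod_congr rfl fun i hi => (if_pos (Finset.mem_filter.1 hi).2).symm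
    · rw [Finset.prod_subtype (Finset.univ.filter fun i => ¬ a i = 1)
        (p := fun i => 2 ≤ a i)
        (fun i => by
          simp only [Finset.mem_filter, Finset.mem_univ, true_and]
          have := ha i
          constructor
          · intro hne; omega
          · intro h2; omega)
        (fun i => if a i = 1
          then (Set.Icc (x i) (y i)).indicator (fun t => t ^ b i) (z i)
          else ∫ t : ℝ, (box2 (x i) (y i)).indicator (Gker (a i - 2) (b i)) (z i, t))]
      refine (Finset.prod_congr rfl fun j _ => ?_).symm
      have hne : ¬ a j.1 = 1 := by have := j.2; omega
      rw [if_neg hne]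
  refine Eq.trans (MeasureTheory.integral_congr_ae
    (Filter.Eventually.of_forall hcombine)) ?_
  refine Eq.trans (MeasureTheory.integral_fintype_prod_volume_eq_prod
    (fun (i : Fin n) (s : ℝ) => if a i = 1
      then (Set.Icc (x i) (y i)).indicator (fun t => t ^ b i) s
      else ∫ t : ℝ, (box2 (x i) (y i)).indicator (Gker (a i - 2) (b i)) (s, t))) ?_
  refine Finset.prod_congr rfl fun i _ => ?_
  by_cases h1 : a i = 1
  · simp only [if_pos h1]
    rw [show (fun s => (Set.Icc (x i) (y i)).indicator (fun t => t ^ b i) s)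
        = (Set.Icc (x i) (y i)).indicator (fun t => t ^ b i) from rfl,
      MeasureTheory.integral_indicator measurableSet_Icc,
      MeasureTheory.integral_Icc_eq_integral_Ioc,
      ← intervalIntegral.integral_of_le (hxy i).le]
    rw [hblk, tr, if_pos (hxy i)]
  · simp only [if_neg h1]
    rw [Gblk, tr]
    simp only [if_pos (hxy i)]
    have hcont : Continuous (Gker (a i - 2) (b i)) := by unfold Gker; fun_prop
    have hIb : Integrable ((box2 (x i) (y i)).indicator (Gker (a i - 2) (b i)))
        ((volume : Measure ℝ).prod volume) := by
      rw [← Measure.volume_eq_prod]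
      exact integrable_box2_indicator _ _ hcont
    rw [show (∫ p : ℝ × ℝ, (box2 (x i) (y i)).indicator (Gker (a i - 2) (b i)) p)
        = ∫ s : ℝ, ∫ t : ℝ, (box2 (x i) (y i)).indicator (Gker (a i - 2) (b i)) (s, t) from by
      rw [Measure.volume_eq_prod]
      exact MeasureTheory.integral_prod _ hIb]


lemma rank_eq_sum {n : ℕ} (M : Multiset (Box n)) (u v : Fin n → ℝ) :
    rankInv n M u v = (M.map (fun box =>
      if (∀ j, box.1.1 j ≤ u j) ∧ (∀ j, u j ≤ v j) ∧ (∀ j, v j ≤ box.1.2 j)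
      then (1:ℝ) else 0)).sum := by
  unfold rankInv
  induction M using Multiset.induction_on with
  | empty => simp
  | cons a s ih =>
    rw [Multiset.filter_cons, Multiset.map_cons, Multiset.sum_cons, ← ih]
    by_cases h : (∀ j, a.1.1 j ≤ u j) ∧ (∀ j, u j ≤ v j) ∧ (∀ j, v j ≤ a.1.2 j)
    · rw [if_pos h]
      simp [h]
      ring
    · rw [if_neg h]
      simp [h]

lemma integral_msum {n : ℕ} {a : Fin n → ℕ} {γ : Type*} (M : Multiset γ) (F : γ → Om n a → ℝ)
    (h : ∀ g ∈ M, Integrable (F g)) :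
    Integrable (fun ω => (M.map (fun g => F g ω)).sum) ∧
      (∫ ω : Om n a, (M.map (fun g => F g ω)).sum)
        = (M.map (fun g => ∫ ω : Om n a, F g ω)).sum := by
  induction M using Multiset.induction_on with
  | empty => simp [integrable_const]
  | cons c s ih =>
    have hc := h c (Multiset.mem_cons_self c s)
    obtain ⟨ih1, ih2⟩ := ih (fun g hg => h g (Multiset.mem_cons_of_mem hg))
    have hfe : (fun ω => ((c ::ₘ s).map (fun g => F g ω)).sum)
        = fun ω => F c ω + (s.map (fun g => F g ω)).sum := by
      funext ω
      rw [Multiset.map_cons, Multiset.sum_cons]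
    constructor
    · rw [hfe]
      exact hc.add ih1
    · rw [hfe, integral_add hc ih1, ih2, Multiset.map_cons, Multiset.sum_cons]

lemma Finv_eq {n : ℕ} (a b : Fin n → ℕ) (ha : ∀ j, 1 ≤ a j) :
    Finv n a b = Phi n (fun i => if a i = 1 then hblk (b i) else Gblk (a i - 2) (b i)) := by
  funext M
  have h1 : Finv n a b M = ∫ zw : Om n a,
      (M.map (fun box => polyP n a b zw *
        (if condP n a box.1.1 box.1.2 zw then (1:ℝ) else 0))).sum := by
    unfold Finv
    congr 1
    funext zw
    rw [rank_eq_sum, ← Multiset.sum_map_mul_left]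
    refine congrArg Multiset.sum (Multiset.map_congr rfl fun box _ => ?_)
    exact congrArg _ (if_congr Iff.rfl rfl rfl)
  have hIb : ∀ box ∈ M, Integrable (fun zw : Om n a =>
      polyP n a b zw * (if condP n a box.1.1 box.1.2 zw then (1:ℝ) else 0)) := by
    intro box _
    have : (fun zw : Om n a =>
        polyP n a b zw * (if condP n a box.1.1 box.1.2 zw then (1:ℝ) else 0))
        = {zw : Om n a | condP n a box.1.1 box.1.2 zw}.indicator (polyP n a b) := by
      funext zw
      rw [Set.indicator_apply]
      simp only [Set.mem_setOf_eq]
      by_cases h : condP n a box.1.1 box.1.2 zw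
      · rw [if_pos h, if_pos h, mul_one]
      · rw [if_neg h, if_neg h, mul_zero]
    rw [this]
    exact integrable_condP_indicator a b _ _
  rw [h1, (integral_msum M _ hIb).2]
  show (M.map (fun box => ∫ zw : Om n a,
      polyP n a b zw * (if condP n a box.1.1 box.1.2 zw then (1:ℝ) else 0))).sum
    = (M.map (fun box => ∏ i,
        (if a i = 1 then hblk (b i) else Gblk (a i - 2) (b i)) (box.1.1 i) (box.1.2 i))).sum
  congr 1
  apply Multiset.map_congr rfl
  intro box _
  rw [per_box a b ha box.1.1 box.1.2 box.2]
  refine Finset.prod_congr rfl fun i _ => ?_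
  by_cases h : a i = 1
  · rw [if_pos h, if_pos h]
  · rw [if_neg h, if_neg h]

lemma pBox_eq {n : ℕ} (a b : Fin n → ℕ) :
    pBox n a b = Phi n (fun i => mon (a i) (b i)) := by
  funext M
  show (M.map (fun xy : Box n =>
      ∏ j, (xy.1.2 j - xy.1.1 j) ^ a j * (xy.1.2 j + xy.1.1 j) ^ b j)).sum
    = (M.map (fun box : Box n => ∏ i, mon (a i) (b i) (box.1.1 i) (box.1.2 i))).sum
  congr 1
  apply Multiset.map_congr rfl
  intro box _
  refine Finset.prod_congr rfl fun i _ => ?_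
  rw [mon, tr, if_pos (box.2 i)]

lemma Finv_set_eq (n : ℕ) :
    {f : Multiset (Box n) → ℝ | ∃ a b : Fin n → ℕ, (∀ j, 1 ≤ a j) ∧ f = Finv n a b}
      = {f | ∃ g : Fin n → V2, (∀ i, g i ∈ hSet ∪ GSet) ∧ f = Phi n g} := by
  ext f
  constructor
  · rintro ⟨a, b, ha, rfl⟩
    refine ⟨fun i => if a i = 1 then hblk (b i) else Gblk (a i - 2) (b i),
      fun i => ?_, Finv_eq a b ha⟩
    show (if a i = 1 then hblk (b i) else Gblk (a i - 2) (b i)) ∈ hSet ∪ GSet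
    by_cases h : a i = 1
    · rw [if_pos h]; exact Or.inl ⟨b i, rfl⟩
    · rw [if_neg h]; exact Or.inr ⟨a i - 2, b i, rfl⟩
  · rintro ⟨g, hg, rfl⟩
    have hchoice : ∀ i, ∃ p : ℕ × ℕ,
        (p.1 = 1 ∧ g i = hblk p.2) ∨ (2 ≤ p.1 ∧ g i = Gblk (p.1 - 2) p.2) := by
      intro i
      rcases hg i with ⟨b', hb⟩ | ⟨c', b', hb⟩
      · exact ⟨(1, b'), Or.inl ⟨rfl, hb⟩⟩
      · exact ⟨(c' + 2, b'), Or.inr ⟨by omega, by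
          rw [hb, show c' + 2 - 2 = c' from by omega]⟩⟩
    choose p hp using hchoice
    refine ⟨fun i => (p i).1, fun i => (p i).2, fun i => ?_, ?_⟩
    · show 1 ≤ (p i).1
      rcases hp i with ⟨h1, _⟩ | ⟨h1, _⟩ <;> omega
    · rw [Finv_eq _ _ (fun i => by
        show 1 ≤ (p i).1
        rcases hp i with ⟨h1, _⟩ | ⟨h1, _⟩ <;> omega)]
      congr 1
      funext i
      rcases hp i with ⟨h1, h2⟩ | ⟨h1, h2⟩
      · rw [if_pos h1, h2]
      · rw [if_neg (by omega), h2]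

lemma pBox_set_eq (n : ℕ) :
    {f : Multiset (Box n) → ℝ | ∃ a b : Fin n → ℕ, (∀ j, 1 ≤ a j) ∧ f = pBox n a b}
      = {f | ∃ g : Fin n → V2, (∀ i, g i ∈ M1) ∧ f = Phi n g} := by
  ext f
  constructor
  · rintro ⟨a, b, ha, rfl⟩
    refine ⟨fun i => mon (a i) (b i), fun i =>
      ⟨a i - 1, b i, by rw [show a i - 1 + 1 = a i from by have := ha i; omega]⟩,
      pBox_eq a b⟩
  · rintro ⟨g, hg, rfl⟩
    choose a' b' hab using hg
    exact ⟨fun i => a' i + 1, b', fun i => by show 1 ≤ a' i + 1; omega, by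
      rw [pBox_eq]
      congr 1
      funext i
      exact hab i⟩

end
end Aux

/-- In the ℝ-vector space of real-valued functions on the set of finite
multisets of boxes in `ℝ^n`, the span of `{F_{a,b} : (a,b) ∈ ℕ₊^n × ℕ^n}` equals the span
of `{p_{a,b} : (a,b) ∈ ℕ₊^n × ℕ^n}`. -/
theorem stmt7 (n : ℕ) (hn : 1 ≤ n) :
    Submodule.span ℝ {f : Multiset (Box n) → ℝ |
        ∃ a b : Fin n → ℕ, (∀ j, 1 ≤ a j) ∧ f = Finv n a b} =
      Submodule.span ℝ {f : Multiset (Box n) → ℝ |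
        ∃ a b : Fin n → ℕ, (∀ j, 1 ≤ a j) ∧ f = pBox n a b} := by
  rw [Finv_set_eq n, pBox_set_eq n]
  exact span_Phi_eq span_blocks
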